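/- For fixed m > 0 and 0 ≤ β < 2, there exists σ ∈ ℝ such that Re λ(σ) = m(−2cos 2σ + (4+2β)cos σ − (2+2β)) > 0; i.e., the uniform state is spectrally unstable for subcritical bias. -/
import Mathlib

/-- For subcritical bias `0 ≤ β < 2`, the uniform state of mass `m > 0` is
spectrally unstable: some Fourier mode has positive growth rate. -/
theorem dispersion_unstable_subcritical (m β : ℝ) (hm : 0 < m)
    (hβ0 : 0 ≤ β) (hβ2 : β < 2) :
    ∃ σ : ℝ,
      0 < m * (-2 * Real.cos (2 * σ) + (4 + 2 * β) * Real.cos σ - (2 + 2 * β)) := by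
  refine ⟨Real.arccos ((β + 2) / 4), ?_⟩
  have hc : Real.cos (Real.arccos ((β + 2) / 4)) = (β + 2) / 4 :=
    Real.cos_arccos (by linarith) (by linarith)
  rw [Real.cos_two_mul, hc]
  have h : 0 < (2 - β)^2 / 4 := by nlinarith
  nlinarith [h]
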